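/- The integral operator T on ℝ² with kernel K(x,y) = (|y|² − |x|²) / (|x−y|^{2+α} (1+|x|²)^{1−β/2} (1+|y|²)) is bounded on L²(ℝ²) for every α ∈ (0,1) and 0 ≤ β < 1+α. -/

import Mathlib

open MeasureTheory
open scoped ENNReal

noncomputable section

abbrev E2 := EuclideanSpace ℝ (Fin 2)

/-- The kernel `K(x,y) = (|y|²−|x|²)/(|x−y|^{2+α} (1+|x|²)^{1−β/2} (1+|y|²))`. -/
def Kker (α β : ℝ) (x y : E2) : ℝ :=
  (‖y‖ ^ 2 - ‖x‖ ^ 2) /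
    (‖x - y‖ ^ (2 + α) * (1 + ‖x‖ ^ 2) ^ (1 - β / 2) * (1 + ‖y‖ ^ 2))

namespace KOp

/-- majorant kernel -/
def kb (α β : ℝ) (x y : E2) : ℝ :=
  ‖x - y‖ ^ (-(1+α)) * ((‖x‖ + ‖y‖) * ((1 + ‖x‖) ^ (β-2) * (1 + ‖y‖) ^ (-(2:ℝ))))

lemma kb_nonneg (α β : ℝ) (x y : E2) : 0 ≤ kb α β x y := by
  unfold kb
  have h0 : (0:ℝ) ≤ ‖x - y‖ := norm_nonneg _
  positivity

lemma rpow_one_add_sq_ge {a t : ℝ} (ha : 0 ≤ a) (ht0 : 0 ≤ t) (ht1 : t ≤ 1) :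
    (1+a) ^ (2*t) / 2 ≤ (1 + a^2) ^ t := by
  have h1 : (0:ℝ) < 1 + a := by linarith
  have key : ((1+a)^2 / 2 : ℝ) ^ t ≤ (1+a^2) ^ t := by
    apply Real.rpow_le_rpow (by positivity) _ ht0
    nlinarith [sq_nonneg (1-a)]
  have e1 : (1+a)^(2*t) = (((1+a):ℝ)^2) ^ t := by
    rw [← Real.rpow_natCast (1+a) 2, ← Real.rpow_mul h1.le]
    norm_num
  have h2t : (2:ℝ)^t ≤ 2 := by
    calc (2:ℝ)^t ≤ 2^(1:ℝ) := Real.rpow_le_rpow_of_exponent_le one_le_two ht1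
    _ = 2 := Real.rpow_one 2
  calc (1+a) ^ (2*t) / 2 = (((1+a):ℝ)^2) ^ t / 2 := by rw [e1]
    _ ≤ (((1+a):ℝ)^2) ^ t / 2^t :=
        div_le_div_of_nonneg_left (Real.rpow_nonneg (by positivity) _) (by positivity) h2t
    _ = (((1+a)^2 : ℝ) / 2) ^ t := by
        rw [Real.div_rpow (by positivity) (by norm_num)]
    _ ≤ (1+a^2) ^ t := key

lemma kker_le_kb {α β : ℝ} (hα : 0 < α) (hβ0 : 0 ≤ β) (hβ2 : β ≤ 2) (x y : E2) :
    |Kker α β x y| ≤ 4 * kb α β x y := by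
  set a := ‖x‖ with ha
  set b := ‖y‖ with hb
  set D := ‖x - y‖ with hD
  have ha0 : 0 ≤ a := norm_nonneg _
  have hb0 : 0 ≤ b := norm_nonneg _
  have hD0 : 0 ≤ D := norm_nonneg _
  rcases eq_or_lt_of_le hD0 with hD0' | hDpos
  · have : Kker α β x y = 0 := by
      unfold Kker
      rw [← hD, ← hD0', Real.zero_rpow (by positivity)]
      simp
    rw [this, abs_zero]
    exact mul_nonneg (by norm_num) (kb_nonneg _ _ _ _)
  · have h1a : (0:ℝ) < 1 + a := by linarith
    have h1b : (0:ℝ) < 1 + b := by linarith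
    have hPpos : (0:ℝ) < (1 + a^2) ^ (1 - β/2) := Real.rpow_pos_of_pos (by positivity) _
    have hQpos : (0:ℝ) < 1 + b^2 := by positivity
    have hDr : (0:ℝ) < D ^ (2+α) := Real.rpow_pos_of_pos hDpos _
    have hnum : |b ^ 2 - a ^ 2| ≤ D * (a + b) := by
      have h1 : |b - a| ≤ D := by
        rw [hD, ← norm_neg (x - y)]; simp only [neg_sub]
        exact abs_norm_sub_norm_le y x
      calc |b ^ 2 - a ^ 2| = |b - a| * |b + a| := by rw [← abs_mul]; ring_nf
        _ ≤ D * (a + b) := by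
            apply mul_le_mul h1 _ (abs_nonneg _) hD0
            rw [abs_of_nonneg (by linarith)]; linarith
    have hP : (1+a) ^ (2 - β) / 2 ≤ (1 + a^2) ^ (1 - β/2) := by
      have h := rpow_one_add_sq_ge ha0 (t := 1 - β/2) (by linarith) (by linarith)
      rw [show 2*(1-β/2) = 2 - β by ring] at h
      exact h
    have hDen_pos : (0:ℝ) < D ^ (2+α) * (1 + a^2) ^ (1 - β/2) * (1 + b^2) := by positivity
    have habs : |Kker α β x y| ≤ (D * (a+b)) / (D ^ (2+α) * (1 + a^2) ^ (1 - β/2) * (1 + b^2)) := by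
      unfold Kker
      rw [abs_div, abs_of_pos hDen_pos]
      gcongr
    -- invert bounds
    have hPinv : ((1 + a^2) ^ (1 - β/2))⁻¹ ≤ 2 * (1+a) ^ (β - 2) := by
      have h2 : ((1 + a^2) ^ (1 - β/2))⁻¹ ≤ ((1+a) ^ (2 - β) / 2)⁻¹ :=
        inv_anti₀ (by positivity) hP
      rw [show (β - 2 : ℝ) = -(2 - β) by ring, Real.rpow_neg h1a.le]
      calc ((1 + a^2) ^ (1 - β/2))⁻¹ ≤ ((1+a) ^ (2 - β) / 2)⁻¹ := h2
        _ = 2 * ((1+a) ^ (2 - β))⁻¹ := by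
            rw [inv_div]; ring
    have hQinv : ((1 + b^2))⁻¹ ≤ 2 * (1+b) ^ (-(2:ℝ)) := by
      have hQ : (1+b)^2 / 2 ≤ 1 + b^2 := by nlinarith [sq_nonneg (1-b)]
      have h2 : (1 + b^2)⁻¹ ≤ ((1+b)^2 / 2)⁻¹ := inv_anti₀ (by positivity) hQ
      rw [show (-(2:ℝ)) = -((2:ℕ):ℝ) by norm_num, Real.rpow_neg h1b.le, Real.rpow_natCast]
      calc (1 + b^2)⁻¹ ≤ ((1+b)^2 / 2)⁻¹ := h2
        _ = 2 * ((1+b)^2)⁻¹ := by rw [inv_div]; ring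
    have hDD : D / D ^ (2+α) = D ^ (-(1+α)) := by
      rw [show (-(1+α) : ℝ) = 1 - (2+α) by ring, Real.rpow_sub hDpos, Real.rpow_one]
    have hsplit : (D * (a+b)) / (D ^ (2+α) * (1 + a^2) ^ (1 - β/2) * (1 + b^2))
        = (a+b) * ((D / D^(2+α)) * (((1 + a^2) ^ (1 - β/2))⁻¹ * ((1 + b^2))⁻¹)) := by
      field_simp
    calc |Kker α β x y| ≤ _ := habs
      _ = (a+b) * ((D / D^(2+α)) * (((1 + a^2) ^ (1 - β/2))⁻¹ * ((1 + b^2))⁻¹)) := hsplit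
      _ ≤ (a+b) * ((D / D^(2+α)) * ((2 * (1+a) ^ (β - 2)) * (2 * (1+b) ^ (-(2:ℝ))))) := by
          gcongr
          all_goals first
            | exact hPinv
            | exact hQinv
            | exact div_nonneg hD0 hDr.le
            | positivity
      _ = 4 * kb α β x y := by
          rw [hDD]
          unfold kb
          rw [← ha, ← hb, ← hD]
          ring

lemma annulus_term {α R : ℝ} (hR : 0 < R) (n : ℕ) :
    (R * (2⁻¹:ℝ)^(n+1)) ^ (-(1+α)) * (R * (2⁻¹:ℝ)^n)^2
      = (2:ℝ)^(1+α) * ((((2⁻¹:ℝ)^(1-α) : ℝ))^n * R^(1-α)) := by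
  have h2 : (0:ℝ) < 2⁻¹ := by norm_num
  have hp1 : (0:ℝ) < (2⁻¹:ℝ)^(n+1) := by positivity
  rw [Real.mul_rpow hR.le hp1.le, mul_pow]
  have e1 : ((2⁻¹:ℝ)^(n+1)) ^ (-(1+α)) = (2⁻¹:ℝ) ^ (((n:ℝ)+1) * (-(1+α))) := by
    rw [← Real.rpow_natCast (2⁻¹:ℝ) (n+1), ← Real.rpow_mul h2.le]
    push_cast
    ring_nf
  have e2 : (((2⁻¹:ℝ))^n)^2 = (2⁻¹:ℝ) ^ ((2:ℝ)*(n:ℝ)) := by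
    rw [← pow_mul, ← Real.rpow_natCast (2⁻¹:ℝ) (n*2)]
    push_cast
    ring_nf
  have e3 : (R:ℝ)^(2:ℕ) = R ^ ((2:ℕ):ℝ) := (Real.rpow_natCast R 2).symm
  rw [e1, e2, e3]
  have e4 : R ^ (-(1+α)) * (R ^ (((2:ℕ)):ℝ)) = R ^ (1-α) := by
    rw [← Real.rpow_add hR]
    congr 1
    push_cast
    ring
  have e5 : (2⁻¹:ℝ) ^ (((n:ℝ)+1) * (-(1+α))) * (2⁻¹:ℝ) ^ ((2:ℝ)*(n:ℝ))
      = (2:ℝ)^(1+α) * (((2⁻¹:ℝ)^(1-α):ℝ))^n := by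
    rw [← Real.rpow_add h2]
    have : ((n:ℝ)+1) * (-(1+α)) + (2:ℝ)*(n:ℝ) = (1-α)*(n:ℝ) + (-(1+α)) := by ring
    rw [this, Real.rpow_add h2, ← Real.rpow_natCast ((2⁻¹:ℝ)^(1-α)) n,
      ← Real.rpow_mul h2.le]
    rw [show (2⁻¹:ℝ) ^ (-(1+α)) = (2:ℝ)^(1+α) by
      rw [← Real.rpow_neg_one (2:ℝ), ← Real.rpow_mul (by norm_num : (0:ℝ) ≤ 2)]
      ring_nf]
    ring_nf
  calc R ^ (-(1+α)) * (2⁻¹:ℝ) ^ (((n:ℝ)+1) * (-(1+α))) * (R ^ (((2:ℕ)):ℝ) * (2⁻¹:ℝ) ^ ((2:ℝ)*(n:ℝ)))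
      = (R ^ (-(1+α)) * (R ^ (((2:ℕ)):ℝ))) * ((2⁻¹:ℝ) ^ (((n:ℝ)+1) * (-(1+α))) * (2⁻¹:ℝ) ^ ((2:ℝ)*(n:ℝ))) := by ring
    _ = R ^ (1-α) * ((2:ℝ)^(1+α) * (((2⁻¹:ℝ)^(1-α):ℝ))^n) := by rw [e4, e5]
    _ = (2:ℝ)^(1+α) * ((((2⁻¹:ℝ)^(1-α):ℝ))^n * R^(1-α)) := by ring

lemma mem_annulus {R : ℝ} (hR : 0 < R) (z : E2) (hz : ‖z‖ ≤ R) (hz0 : z ≠ 0) :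
    ∃ n : ℕ, R * (2⁻¹:ℝ)^(n+1) < ‖z‖ ∧ ‖z‖ ≤ R * (2⁻¹:ℝ)^n := by
  have hzpos : 0 < ‖z‖ := norm_pos_iff.mpr hz0
  have hex : ∃ m : ℕ, R * (2⁻¹:ℝ)^m < ‖z‖ := by
    obtain ⟨m, hm⟩ := exists_pow_lt_of_lt_one (div_pos hzpos hR) (by norm_num : (2⁻¹:ℝ) < 1)
    exact ⟨m, by rwa [← lt_div_iff₀' hR]⟩
  classical
  set m₀ := Nat.find hex with hm₀
  have hspec : R * (2⁻¹:ℝ)^m₀ < ‖z‖ := Nat.find_spec hex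
  have hm0ne : m₀ ≠ 0 := by
    intro h
    rw [h] at hspec
    simp only [pow_zero, mul_one] at hspec
    linarith
  obtain ⟨n, hn⟩ := Nat.exists_eq_succ_of_ne_zero hm0ne
  refine ⟨n, ?_, ?_⟩
  · rw [← Nat.succ_eq_add_one, ← hn]; exact hspec
  · have := Nat.find_min hex (m := n) (by omega)
    linarith [not_lt.mp this]

lemma ball_lintegral {α : ℝ} (hα0 : 0 < α) (hα1 : α < 1) :
    ∃ c : ℝ≥0∞, c ≠ ∞ ∧ ∀ (x : E2) (R : ℝ), 0 < R →
      ∫⁻ y, (Metric.closedBall x R).indicator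
          (fun y => ENNReal.ofReal (‖x - y‖ ^ (-(1+α)))) y
        ≤ c * ENNReal.ofReal (R ^ (1-α)) := by
  set V := volume (Metric.ball (0:E2) 1) with hV
  have hVfin : V ≠ ∞ := measure_ball_lt_top.ne
  set q : ℝ≥0∞ := ENNReal.ofReal ((2⁻¹:ℝ)^(1-α)) with hq
  have hq1 : q < 1 := by
    rw [hq, ← ENNReal.ofReal_one]
    exact ENNReal.ofReal_lt_ofReal_iff_of_nonneg (by positivity) |>.mpr
      (Real.rpow_lt_one (by norm_num) (by norm_num) (by linarith))
  have hsub : (1:ℝ≥0∞) - q ≠ 0 := by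
    intro h
    rw [tsub_eq_zero_iff_le] at h
    exact absurd (lt_of_lt_of_le hq1 h) (lt_irrefl _)
  refine ⟨ENNReal.ofReal ((2:ℝ)^(1+α)) * V * (1 - q)⁻¹,
    by
      apply ENNReal.mul_ne_top
      apply ENNReal.mul_ne_top ENNReal.ofReal_ne_top hVfin
      exact ENNReal.inv_ne_top.mpr hsub,
    ?_⟩
  intro x R hR
  -- translate
  set F : E2 → ℝ≥0∞ := fun z => (Metric.closedBall (0:E2) R).indicator
      (fun z => ENNReal.ofReal (‖z‖ ^ (-(1+α)))) z with hF
  have hFmeas : Measurable F := by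
    apply Measurable.indicator _ measurableSet_closedBall
    exact (measurable_norm.pow_const _).ennreal_ofReal
  have htrans : ∫⁻ y, (Metric.closedBall x R).indicator
      (fun y => ENNReal.ofReal (‖x - y‖ ^ (-(1+α)))) y = ∫⁻ z, F z := by
    have heq : ∀ y : E2, (Metric.closedBall x R).indicator
        (fun y => ENNReal.ofReal (‖x - y‖ ^ (-(1+α)))) y = F (y - x) := by
      intro y
      simp only [Set.indicator, hF, Metric.mem_closedBall, dist_eq_norm, sub_zero,
        norm_sub_rev x y]
    rw [funext heq]
    exact (measurePreserving_sub_right volume x).lintegral_comp hFmeas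
  rw [htrans]
  -- annuli
  set A : ℕ → Set E2 := fun n => {z : E2 | R * (2⁻¹:ℝ)^(n+1) < ‖z‖ ∧ ‖z‖ ≤ R * (2⁻¹:ℝ)^n}
    with hA
  have hAmeas : ∀ n, MeasurableSet (A n) := by
    intro n
    have : A n = norm ⁻¹' (Set.Ioc (R * (2⁻¹:ℝ)^(n+1)) (R * (2⁻¹:ℝ)^n)) := rfl
    rw [this]
    exact measurable_norm measurableSet_Ioc
  have hpt : ∀ z, F z ≤ ∑' n, (A n).indicator
      (fun _ => ENNReal.ofReal ((R * (2⁻¹:ℝ)^(n+1)) ^ (-(1+α)))) z := by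
    intro z
    by_cases hzb : z ∈ Metric.closedBall (0:E2) R
    · by_cases hz0 : z = (0:E2)
      · subst hz0
        have : F 0 = 0 := by
          simp only [hF, Set.indicator_of_mem hzb, norm_zero]
          rw [Real.zero_rpow (by intro h; nlinarith)]
          simp
        rw [this]; exact zero_le
      · have hzR : ‖z‖ ≤ R := by
          rwa [Metric.mem_closedBall, dist_zero_right] at hzb
        obtain ⟨n, hn1, hn2⟩ := mem_annulus hR z hzR hz0
        have hzA : z ∈ A n := ⟨hn1, hn2⟩
        have hFz : F z = ENNReal.ofReal (‖z‖ ^ (-(1+α))) := Set.indicator_of_mem hzb _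
        have hle : ENNReal.ofReal (‖z‖ ^ (-(1+α)))
            ≤ ENNReal.ofReal ((R * (2⁻¹:ℝ)^(n+1)) ^ (-(1+α))) := by
          apply ENNReal.ofReal_le_ofReal
          exact Real.rpow_le_rpow_of_nonpos (by positivity) hn1.le (by linarith)
        calc F z = ENNReal.ofReal (‖z‖ ^ (-(1+α))) := hFz
          _ ≤ ENNReal.ofReal ((R * (2⁻¹:ℝ)^(n+1)) ^ (-(1+α))) := hle
          _ = (A n).indicator (fun _ => ENNReal.ofReal ((R * (2⁻¹:ℝ)^(n+1)) ^ (-(1+α)))) z := by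
              rw [Set.indicator_of_mem hzA]
          _ ≤ _ := ENNReal.le_tsum n
    · have : F z = 0 := Set.indicator_of_notMem hzb _
      rw [this]; exact zero_le
  calc ∫⁻ z, F z ≤ ∫⁻ z, ∑' n, (A n).indicator
        (fun _ => ENNReal.ofReal ((R * (2⁻¹:ℝ)^(n+1)) ^ (-(1+α)))) z := lintegral_mono hpt
    _ = ∑' n, ∫⁻ z, (A n).indicator
        (fun _ => ENNReal.ofReal ((R * (2⁻¹:ℝ)^(n+1)) ^ (-(1+α)))) z := by
        apply lintegral_tsum
        intro n
        exact ((measurable_const).indicator (hAmeas n)).aemeasurable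
    _ ≤ ∑' n, ENNReal.ofReal ((R * (2⁻¹:ℝ)^(n+1)) ^ (-(1+α)))
          * (ENNReal.ofReal ((R * (2⁻¹:ℝ)^n)^2) * V) := by
        apply ENNReal.tsum_le_tsum
        intro n
        rw [lintegral_indicator_const (hAmeas n)]
        gcongr
        calc volume (A n) ≤ volume (Metric.closedBall (0:E2) (R * (2⁻¹:ℝ)^n)) := by
              apply measure_mono
              intro z hz
              rw [Metric.mem_closedBall, dist_zero_right]
              exact hz.2
          _ = ENNReal.ofReal ((R * (2⁻¹:ℝ)^n) ^ Module.finrank ℝ E2) * V := by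
              rw [Measure.addHaar_closedBall volume (0:E2) (by positivity)]
          _ = ENNReal.ofReal ((R * (2⁻¹:ℝ)^n)^2) * V := by
              norm_num [finrank_euclideanSpace]
    _ = ∑' (n:ℕ), (ENNReal.ofReal ((2:ℝ)^(1+α)) * V * ENNReal.ofReal (R^(1-α))) * q^n := by
        congr 1
        funext n
        rw [← mul_assoc, ← ENNReal.ofReal_mul (by positivity), annulus_term hR n]
        rw [ENNReal.ofReal_mul (by positivity), ENNReal.ofReal_mul (by positivity),
          ENNReal.ofReal_pow (by positivity)]
        ring
    _ = (ENNReal.ofReal ((2:ℝ)^(1+α)) * V * ENNReal.ofReal (R^(1-α))) * ∑' (n:ℕ), q^n :=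
        ENNReal.tsum_mul_left
    _ = ENNReal.ofReal ((2:ℝ)^(1+α)) * V * (1-q)⁻¹ * ENNReal.ofReal (R^(1-α)) := by
        rw [ENNReal.tsum_geometric]
        ring

lemma half_rpow {u : ℝ} (hu : 0 ≤ u) (t : ℝ) : (u/2)^t = u^t * (2:ℝ)^(-t) := by
  rw [Real.div_rpow hu (by norm_num), Real.rpow_neg (by norm_num), div_eq_mul_inv]

lemma weight_finite {t : ℝ} (ht : 2 < t) :
    (∫⁻ y : E2, ENNReal.ofReal ((1 + ‖y‖) ^ (-t))) < ∞ := by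
  apply finite_integral_one_add_norm
  rw [finrank_euclideanSpace]
  simpa using ht

lemma lint_ofReal_const_mul (c : ℝ) (hc : 0 ≤ c) (g : E2 → ℝ) :
    ∫⁻ z, ENNReal.ofReal (c * g z) = ENNReal.ofReal c * ∫⁻ z, ENNReal.ofReal (g z) := by
  simp_rw [ENNReal.ofReal_mul hc]
  exact lintegral_const_mul' _ _ ENNReal.ofReal_ne_top

/-- Schur estimate, integration in `y`. -/
lemma estA {α β s : ℝ} (hα0 : 0 < α) (hα1 : α < 1) (hβ0 : 0 ≤ β) (hβ2 : β ≤ 2)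
    (hs0 : 0 < s) (hsle : β - 2 - α ≤ -s) :
    ∃ Λ : ℝ≥0∞, Λ ≠ ∞ ∧ ∀ x : E2,
      ∫⁻ y, ENNReal.ofReal (kb α β x y * (1+‖y‖)^(-s))
        ≤ Λ * ENNReal.ofReal ((1+‖x‖)^(-s)) := by
  obtain ⟨c, hcfin, hball⟩ := ball_lintegral hα0 hα1
  set I2 := ∫⁻ y : E2, ENNReal.ofReal ((1 + ‖y‖) ^ (-(2+s))) with hI2def
  have hI2 : I2 ≠ ∞ := (weight_finite (by linarith)).ne
  refine ⟨ENNReal.ofReal (3*2^(2+s) * 2^(α-1)) * c + ENNReal.ofReal (5*2^α) * I2,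
    by
      apply ENNReal.add_ne_top.mpr
      exact ⟨ENNReal.mul_ne_top ENNReal.ofReal_ne_top hcfin,
        ENNReal.mul_ne_top ENNReal.ofReal_ne_top hI2⟩, ?_⟩
  intro x
  set a := ‖x‖ with hadef
  have ha0 : 0 ≤ a := norm_nonneg _
  have h1a : (0:ℝ) < 1 + a := by linarith
  have h1a1 : (1:ℝ) ≤ 1 + a := by linarith
  set R := (1+a)/2 with hRdef
  have hR : 0 < R := by positivity
  -- the two majorants
  set Ψ₁ : E2 → ℝ≥0∞ := fun y => ENNReal.ofReal (3*2^(2+s) * (1+a)^(β-3-s)) *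
      (Metric.closedBall x R).indicator (fun y => ENNReal.ofReal (‖x - y‖ ^ (-(1+α)))) y
    with hΨ₁
  set Ψ₂ : E2 → ℝ≥0∞ := fun y =>
      ENNReal.ofReal ((5*2^α) * ((1+a)^(-s) * (1+‖y‖)^(-(2+s)))) with hΨ₂
  have hpt : ∀ y, ENNReal.ofReal (kb α β x y * (1+‖y‖)^(-s)) ≤ Ψ₁ y + Ψ₂ y := by
    intro y
    set b := ‖y‖ with hbdef
    have hb0 : 0 ≤ b := norm_nonneg _
    have h1b : (0:ℝ) < 1 + b := by linarith
    set D := ‖x - y‖ with hDdef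
    have hD0 : 0 ≤ D := norm_nonneg _
    have hba : b ≤ a + D := by
      rw [hbdef, hadef, hDdef]
      calc ‖y‖ = ‖x - (x - y)‖ := by congr 1; abel
        _ ≤ ‖x‖ + ‖x - y‖ := norm_sub_le _ _
    have hab : a ≤ b + D := by
      rw [hbdef, hadef, hDdef]
      calc ‖x‖ = ‖y + (x - y)‖ := by congr 1; abel
        _ ≤ ‖y‖ + ‖x - y‖ := norm_add_le _ _
    have hcomb : (1+b)^(-(2:ℝ)) * (1+b)^(-s) = (1+b)^(-(2+s)) := by
      rw [← Real.rpow_add h1b]; congr 1; ring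
    by_cases hmem : y ∈ Metric.closedBall x R
    · -- region i
      have hDR : D ≤ R := by
        rw [hDdef, show ‖x - y‖ = dist x y by rw [dist_eq_norm], dist_comm]
        exact hmem
      have hba' : (1+a)/2 ≤ 1 + b := by
        have h := hab
        linarith [hDR, hRdef.le, hRdef.ge]
      have h2 : (1+b)^(-(2+s)) ≤ 2^(2+s) * (1+a)^(-(2+s)) := by
        have step1 : (1+b)^(-(2+s)) ≤ ((1+a)/2)^(-(2+s)) :=
          Real.rpow_le_rpow_of_nonpos (by positivity) hba' (by linarith)
        have step2 : ((1+a)/2)^(-(2+s)) = (1+a)^(-(2+s)) * 2^(2+s) := by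
          rw [half_rpow h1a.le, neg_neg]
        rw [step2] at step1; linarith
      have h3 : a + b ≤ 3*(1+a) := by
        have h := hba
        linarith [hDR, hRdef.le, hRdef.ge]
      have ecomb : (1+a) * ((1+a)^(β-2) * (1+a)^(-(2+s))) = (1+a)^(β-3-s) := by
        rw [← Real.rpow_add h1a, mul_comm, ← Real.rpow_add_one h1a.ne']
        congr 1; ring
      have hreal : kb α β x y * (1+b)^(-s)
          ≤ 3*2^(2+s) * (1+a)^(β-3-s) * D^(-(1+α)) := by
        have c1 : kb α β x y * (1+b)^(-s)
            = (a+b) * ((1+a)^(β-2) * (D^(-(1+α)) * ((1+b)^(-(2:ℝ)) * (1+b)^(-s)))) := by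
          unfold kb
          rw [← hadef, ← hbdef, ← hDdef]
          ring
        rw [c1, hcomb]
        calc (a+b) * ((1+a)^(β-2) * (D^(-(1+α)) * (1+b)^(-(2+s))))
            ≤ (3*(1+a)) * ((1+a)^(β-2) * (D^(-(1+α)) * (2^(2+s) * (1+a)^(-(2+s))))) := by
              have hDnn : (0:ℝ) ≤ D^(-(1+α)) := Real.rpow_nonneg hD0 _
              have hPnn : (0:ℝ) ≤ (1+a)^(β-2) := Real.rpow_nonneg h1a.le _
              apply mul_le_mul h3 _ (by positivity) (by positivity)
              apply mul_le_mul_of_nonneg_left _ hPnn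
              exact mul_le_mul_of_nonneg_left h2 hDnn
          _ = 3*2^(2+s) * (1+a)^(β-3-s) * D^(-(1+α)) := by
              rw [← ecomb]; ring
      calc ENNReal.ofReal (kb α β x y * (1+‖y‖)^(-s))
          ≤ ENNReal.ofReal (3*2^(2+s) * (1+a)^(β-3-s) * D^(-(1+α))) :=
            ENNReal.ofReal_le_ofReal (by rw [← hbdef]; exact hreal)
        _ = ENNReal.ofReal (3*2^(2+s) * (1+a)^(β-3-s)) * ENNReal.ofReal (D^(-(1+α))) := by
            rw [← ENNReal.ofReal_mul (by positivity)]
        _ = Ψ₁ y := by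
            rw [hΨ₁]
            simp only [Set.indicator_of_mem hmem]
            rw [hDdef]
        _ ≤ Ψ₁ y + Ψ₂ y := le_self_add
    · -- region ii
      have hDR : R < D := by
        rw [hDdef, show ‖x - y‖ = dist x y by rw [dist_eq_norm], dist_comm]
        exact lt_of_not_ge (fun h => hmem (Metric.mem_closedBall.mpr h))
      have hDpos : 0 < D := lt_trans hR hDR
      have h5 : a + b ≤ 5*D := by
        have h := hba
        linarith [hDR, hRdef.le, hRdef.ge]
      have hreal : kb α β x y * (1+b)^(-s)
          ≤ (5*2^α) * ((1+a)^(-s) * (1+b)^(-(2+s))) := by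
        have c1 : kb α β x y * (1+b)^(-s)
            = ((a+b) * D^(-(1+α))) * ((1+a)^(β-2) * ((1+b)^(-(2:ℝ)) * (1+b)^(-s))) := by
          unfold kb
          rw [← hadef, ← hbdef, ← hDdef]
          ring
        rw [c1, hcomb]
        have step1 : (a+b) * D^(-(1+α)) ≤ 5 * D^(-α) := by
          have : (a+b) * D^(-(1+α)) ≤ (5*D) * D^(-(1+α)) :=
            mul_le_mul_of_nonneg_right h5 (Real.rpow_nonneg hD0 _)
          have e : D * D^(-(1+α)) = D^(-α) := by
            rw [mul_comm, ← Real.rpow_add_one hDpos.ne']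
            congr 1; ring
          calc (a+b) * D^(-(1+α)) ≤ (5*D) * D^(-(1+α)) := this
            _ = 5 * (D * D^(-(1+α))) := by ring
            _ = 5 * D^(-α) := by rw [e]
        have step2 : D^(-α) ≤ 2^α * (1+a)^(-α) := by
          have t1 : D^(-α) ≤ R^(-α) :=
            Real.rpow_le_rpow_of_nonpos hR hDR.le (by linarith)
          have t2 : R^(-α) = (1+a)^(-α) * 2^α := by
            rw [hRdef, half_rpow h1a.le, neg_neg]
          rw [t2] at t1; linarith
        have step3 : (1+a)^(-α) * (1+a)^(β-2) ≤ (1+a)^(-s) := by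
          rw [← Real.rpow_add h1a]
          exact Real.rpow_le_rpow_of_exponent_le h1a1 (by linarith)
        calc ((a+b) * D^(-(1+α))) * ((1+a)^(β-2) * (1+b)^(-(2+s)))
            ≤ (5 * D^(-α)) * ((1+a)^(β-2) * (1+b)^(-(2+s))) := by
              apply mul_le_mul_of_nonneg_right step1
              exact mul_nonneg (Real.rpow_nonneg h1a.le _) (Real.rpow_nonneg h1b.le _)
          _ ≤ (5 * (2^α * (1+a)^(-α))) * ((1+a)^(β-2) * (1+b)^(-(2+s))) := by
              apply mul_le_mul_of_nonneg_right _
                (mul_nonneg (Real.rpow_nonneg h1a.le _) (Real.rpow_nonneg h1b.le _))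
              have h5nn : (0:ℝ) ≤ 5 := by norm_num
              exact mul_le_mul_of_nonneg_left step2 h5nn
          _ = (5*2^α) * (((1+a)^(-α) * (1+a)^(β-2)) * (1+b)^(-(2+s))) := by ring
          _ ≤ (5*2^α) * ((1+a)^(-s) * (1+b)^(-(2+s))) := by
              apply mul_le_mul_of_nonneg_left _ (by positivity)
              exact mul_le_mul_of_nonneg_right step3 (Real.rpow_nonneg h1b.le _)
      calc ENNReal.ofReal (kb α β x y * (1+‖y‖)^(-s))
          ≤ Ψ₂ y := ENNReal.ofReal_le_ofReal (by rw [← hbdef]; exact hreal)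
        _ ≤ Ψ₁ y + Ψ₂ y := le_add_self
  -- integrate
  have hΨ₁int : ∫⁻ y, Ψ₁ y ≤ ENNReal.ofReal (3*2^(2+s) * 2^(α-1)) * c
      * ENNReal.ofReal ((1+a)^(-s)) := by
    rw [hΨ₁]
    rw [lintegral_const_mul' _ _ ENNReal.ofReal_ne_top]
    calc ENNReal.ofReal (3*2^(2+s) * (1+a)^(β-3-s)) *
          ∫⁻ y, (Metric.closedBall x R).indicator
            (fun y => ENNReal.ofReal (‖x - y‖ ^ (-(1+α)))) y
        ≤ ENNReal.ofReal (3*2^(2+s) * (1+a)^(β-3-s)) * (c * ENNReal.ofReal (R^(1-α))) := by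
          exact mul_le_mul_right (hball x R hR) _
      _ ≤ ENNReal.ofReal (3*2^(2+s) * 2^(α-1)) * c * ENNReal.ofReal ((1+a)^(-s)) := by
          rw [show ENNReal.ofReal (3*2^(2+s) * (1+a)^(β-3-s)) * (c * ENNReal.ofReal (R^(1-α)))
              = (ENNReal.ofReal (3*2^(2+s) * (1+a)^(β-3-s)) * ENNReal.ofReal (R^(1-α))) * c
              by ring]
          rw [show ENNReal.ofReal (3*2^(2+s) * 2^(α-1)) * c * ENNReal.ofReal ((1+a)^(-s))
              = (ENNReal.ofReal (3*2^(2+s) * 2^(α-1)) * ENNReal.ofReal ((1+a)^(-s))) * c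
              by ring]
          apply mul_le_mul_left
          rw [← ENNReal.ofReal_mul (by positivity), ← ENNReal.ofReal_mul (by positivity)]
          apply ENNReal.ofReal_le_ofReal
          have e1 : R^(1-α) = (1+a)^(1-α) * 2^(α-1) := by
            rw [hRdef, half_rpow h1a.le]
            congr 2
            ring
          rw [e1]
          have e2 : (1+a)^(β-3-s) * ((1+a)^(1-α) * 2^(α-1))
              = (3*2^(2+s) * 2^(α-1))⁻¹ * (3*2^(2+s) * 2^(α-1)) * ((1+a)^(β-3-s) * ((1+a)^(1-α) * 2^(α-1))) := by
            rw [inv_mul_cancel₀ (by positivity)]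
            ring
          have key : (1+a)^(β-3-s) * (1+a)^(1-α) ≤ (1+a)^(-s) := by
            rw [← Real.rpow_add h1a]
            exact Real.rpow_le_rpow_of_exponent_le h1a1 (by linarith)
          calc 3*2^(2+s) * (1+a)^(β-3-s) * ((1+a)^(1-α) * 2^(α-1))
              = (3*2^(2+s) * 2^(α-1)) * ((1+a)^(β-3-s) * (1+a)^(1-α)) := by ring
            _ ≤ (3*2^(2+s) * 2^(α-1)) * (1+a)^(-s) := by
                apply mul_le_mul_of_nonneg_left key (by positivity)
  have hΨ₂int : ∫⁻ y, Ψ₂ y ≤ ENNReal.ofReal (5*2^α) * I2 * ENNReal.ofReal ((1+a)^(-s)) := by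
    rw [hΨ₂]
    have : ∀ y : E2, (5*2^α) * ((1+a)^(-s) * (1+‖y‖)^(-(2+s)))
        = ((5*2^α) * (1+a)^(-s)) * (1+‖y‖)^(-(2+s)) := fun y => by ring
    simp_rw [this]
    rw [lint_ofReal_const_mul _ (by positivity)]
    rw [← hI2def, ENNReal.ofReal_mul (by positivity)]
    ring_nf
    exact le_refl _
  calc ∫⁻ y, ENNReal.ofReal (kb α β x y * (1+‖y‖)^(-s))
      ≤ ∫⁻ y, (Ψ₁ y + Ψ₂ y) := lintegral_mono hpt
    _ = (∫⁻ y, Ψ₁ y) + ∫⁻ y, Ψ₂ y := by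
        apply lintegral_add_left
        rw [hΨ₁]
        apply Measurable.const_mul
        exact ((measurable_const.sub measurable_id').norm.pow_const _).ennreal_ofReal.indicator
          measurableSet_closedBall
    _ ≤ ENNReal.ofReal (3*2^(2+s) * 2^(α-1)) * c * ENNReal.ofReal ((1+a)^(-s))
        + ENNReal.ofReal (5*2^α) * I2 * ENNReal.ofReal ((1+a)^(-s)) :=
        add_le_add hΨ₁int hΨ₂int
    _ = (ENNReal.ofReal (3*2^(2+s) * 2^(α-1)) * c + ENNReal.ofReal (5*2^α) * I2)
        * ENNReal.ofReal ((1+a)^(-s)) := by ring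

lemma div_const_rpow {u k : ℝ} (hu : 0 ≤ u) (hk : 0 < k) (t : ℝ) :
    (u/k)^t = u^t * k^(-t) := by
  rw [Real.div_rpow hu hk.le, Real.rpow_neg hk.le, div_eq_mul_inv]

/-- Schur estimate, integration in `x`. -/
lemma estB {α β s ε : ℝ} (hα0 : 0 < α) (hα1 : α < 1) (hβ0 : 0 ≤ β) (hβ2 : β ≤ 2)
    (hs0 : 0 < s) (hs2 : s < 2) (hε0 : 0 < ε) (hεα : ε ≤ α) (hsε : β - α + ε < s) :
    ∃ Λ : ℝ≥0∞, Λ ≠ ∞ ∧ ∀ y : E2,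
      ∫⁻ x, ENNReal.ofReal (kb α β x y * (1+‖x‖)^(-s))
        ≤ Λ * ENNReal.ofReal ((1+‖y‖)^(-s)) := by
  obtain ⟨c, hcfin, hball⟩ := ball_lintegral hα0 hα1
  set t₂ := 2+s+α-ε-β with ht₂def
  have ht₂ : 2 < t₂ := by rw [ht₂def]; linarith
  set I3 := ∫⁻ x : E2, ENNReal.ofReal ((1 + ‖x‖) ^ (-t₂)) with hI3def
  have hI3 : I3 ≠ ∞ := (weight_finite ht₂).ne
  refine ⟨ENNReal.ofReal (3*2^(2+s-β) * 2^(α-1)) * c + ENNReal.ofReal (5*3^(α-ε)*2^ε) * I3,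
    by
      apply ENNReal.add_ne_top.mpr
      exact ⟨ENNReal.mul_ne_top ENNReal.ofReal_ne_top hcfin,
        ENNReal.mul_ne_top ENNReal.ofReal_ne_top hI3⟩, ?_⟩
  intro y
  set b := ‖y‖ with hbdef
  have hb0 : 0 ≤ b := norm_nonneg _
  have h1b : (0:ℝ) < 1 + b := by linarith
  have h1b1 : (1:ℝ) ≤ 1 + b := by linarith
  set R := (1+b)/2 with hRdef
  have hR : 0 < R := by positivity
  set Ψ₁ : E2 → ℝ≥0∞ := fun x => ENNReal.ofReal (3*2^(2+s-β) * (1+b)^(β-3-s)) *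
      (Metric.closedBall y R).indicator (fun x => ENNReal.ofReal (‖y - x‖ ^ (-(1+α)))) x
    with hΨ₁
  set Ψ₂ : E2 → ℝ≥0∞ := fun x =>
      ENNReal.ofReal ((5*3^(α-ε)*2^ε) * ((1+b)^(-s) * (1+‖x‖)^(-t₂))) with hΨ₂
  have hpt : ∀ x, ENNReal.ofReal (kb α β x y * (1+‖x‖)^(-s)) ≤ Ψ₁ x + Ψ₂ x := by
    intro x
    set a := ‖x‖ with hadef
    have ha0 : 0 ≤ a := norm_nonneg _
    have h1a : (0:ℝ) < 1 + a := by linarith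
    set D := ‖x - y‖ with hDdef
    have hD0 : 0 ≤ D := norm_nonneg _
    have hba : b ≤ a + D := by
      rw [hbdef, hadef, hDdef]
      calc ‖y‖ = ‖x - (x - y)‖ := by congr 1; abel
        _ ≤ ‖x‖ + ‖x - y‖ := norm_sub_le _ _
    have hab : a ≤ b + D := by
      rw [hbdef, hadef, hDdef]
      calc ‖x‖ = ‖y + (x - y)‖ := by congr 1; abel
        _ ≤ ‖y‖ + ‖x - y‖ := norm_add_le _ _
    have hcomb : (1+a)^(β-2) * (1+a)^(-s) = (1+a)^(β-2-s) := by
      rw [← Real.rpow_add h1a]; congr 1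
    by_cases hmem : x ∈ Metric.closedBall y R
    · -- region i
      have hDR : D ≤ R := by
        rw [hDdef, show ‖x - y‖ = dist x y by rw [dist_eq_norm]]
        exact hmem
      have h1ab : (1+b)/2 ≤ 1 + a := by
        have h := hba
        linarith [hDR, hRdef.le, hRdef.ge]
      have h2 : (1+a)^(β-2-s) ≤ 2^(2+s-β) * (1+b)^(β-2-s) := by
        have step1 : (1+a)^(β-2-s) ≤ ((1+b)/2)^(β-2-s) :=
          Real.rpow_le_rpow_of_nonpos (by positivity) h1ab (by linarith)
        have step2 : ((1+b)/2)^(β-2-s) = (1+b)^(β-2-s) * 2^(2+s-β) := by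
          rw [div_const_rpow h1b.le (by norm_num)]
          congr 2
          ring
        rw [step2] at step1; linarith
      have h3 : a + b ≤ 3*(1+b) := by
        have h := hab
        linarith [hDR, hRdef.le, hRdef.ge]
      have ecomb : (1+b) * ((1+b)^(-(2:ℝ)) * (1+b)^(β-2-s)) = (1+b)^(β-3-s) := by
        rw [← Real.rpow_add h1b, mul_comm, ← Real.rpow_add_one h1b.ne']
        congr 1; ring
      have hreal : kb α β x y * (1+a)^(-s)
          ≤ 3*2^(2+s-β) * (1+b)^(β-3-s) * D^(-(1+α)) := by
        have c1 : kb α β x y * (1+a)^(-s)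
            = (a+b) * ((1+b)^(-(2:ℝ)) * (D^(-(1+α)) * ((1+a)^(β-2) * (1+a)^(-s)))) := by
          unfold kb
          rw [← hadef, ← hbdef, ← hDdef]
          ring
        rw [c1, hcomb]
        calc (a+b) * ((1+b)^(-(2:ℝ)) * (D^(-(1+α)) * (1+a)^(β-2-s)))
            ≤ (3*(1+b)) * ((1+b)^(-(2:ℝ)) * (D^(-(1+α)) * (2^(2+s-β) * (1+b)^(β-2-s)))) := by
              have hDnn : (0:ℝ) ≤ D^(-(1+α)) := Real.rpow_nonneg hD0 _
              have hQnn : (0:ℝ) ≤ (1+b)^(-(2:ℝ)) := Real.rpow_nonneg h1b.le _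
              apply mul_le_mul h3 _ (by positivity) (by positivity)
              apply mul_le_mul_of_nonneg_left _ hQnn
              exact mul_le_mul_of_nonneg_left h2 hDnn
          _ = 3*2^(2+s-β) * (1+b)^(β-3-s) * D^(-(1+α)) := by
              rw [← ecomb]; ring
      calc ENNReal.ofReal (kb α β x y * (1+‖x‖)^(-s))
          ≤ ENNReal.ofReal (3*2^(2+s-β) * (1+b)^(β-3-s) * D^(-(1+α))) :=
            ENNReal.ofReal_le_ofReal (by rw [← hadef]; exact hreal)
        _ = ENNReal.ofReal (3*2^(2+s-β) * (1+b)^(β-3-s)) * ENNReal.ofReal (D^(-(1+α))) := by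
            rw [← ENNReal.ofReal_mul (by positivity)]
        _ = Ψ₁ x := by
            rw [hΨ₁]
            simp only [Set.indicator_of_mem hmem]
            rw [show ‖y - x‖ = D by rw [hDdef, norm_sub_rev]]
        _ ≤ Ψ₁ x + Ψ₂ x := le_self_add
    · -- region ii
      have hDR : R < D := by
        rw [hDdef, show ‖x - y‖ = dist x y by rw [dist_eq_norm]]
        exact lt_of_not_ge (fun h => hmem (Metric.mem_closedBall.mpr h))
      have hDpos : 0 < D := lt_trans hR hDR
      have h5 : a + b ≤ 5*D := by
        have h := hab
        linarith [hDR, hRdef.le, hRdef.ge]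
      have hD3 : (1+a)/3 ≤ D := by
        rcases le_or_gt a b with hcase | hcase
        · linarith [hDR, hRdef.le, hRdef.ge]
        · have habs : a - b ≤ D := by
            rw [hadef, hbdef, hDdef]
            calc ‖x‖ - ‖y‖ ≤ |‖x‖ - ‖y‖| := le_abs_self _
              _ ≤ ‖x - y‖ := abs_norm_sub_norm_le x y
          linarith [hDR, hRdef.le, hRdef.ge]
      have hreal : kb α β x y * (1+a)^(-s)
          ≤ (5*3^(α-ε)*2^ε) * ((1+b)^(-s) * (1+a)^(-t₂)) := by
        have c1 : kb α β x y * (1+a)^(-s)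
            = ((a+b) * D^(-(1+α))) * (((1+a)^(β-2) * (1+a)^(-s)) * (1+b)^(-(2:ℝ))) := by
          unfold kb
          rw [← hadef, ← hbdef, ← hDdef]
          ring
        rw [c1, hcomb]
        have step1 : (a+b) * D^(-(1+α)) ≤ 5 * D^(-α) := by
          have h' : (a+b) * D^(-(1+α)) ≤ (5*D) * D^(-(1+α)) :=
            mul_le_mul_of_nonneg_right h5 (Real.rpow_nonneg hD0 _)
          have e : D * D^(-(1+α)) = D^(-α) := by
            rw [mul_comm, ← Real.rpow_add_one hDpos.ne']
            congr 1; ring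
          calc (a+b) * D^(-(1+α)) ≤ (5*D) * D^(-(1+α)) := h'
            _ = 5 * (D * D^(-(1+α))) := by ring
            _ = 5 * D^(-α) := by rw [e]
        have step2 : D^(-α) = D^(-(α-ε)) * D^(-ε) := by
          rw [← Real.rpow_add hDpos]; congr 1; ring
        have step3 : D^(-(α-ε)) ≤ 3^(α-ε) * (1+a)^(-(α-ε)) := by
          have t1 : D^(-(α-ε)) ≤ ((1+a)/3)^(-(α-ε)) :=
            Real.rpow_le_rpow_of_nonpos (by positivity) hD3 (by linarith)
          have t2 : ((1+a)/3)^(-(α-ε)) = (1+a)^(-(α-ε)) * 3^(α-ε) := by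
            rw [div_const_rpow h1a.le (by norm_num), neg_neg]
          rw [t2] at t1; linarith
        have step4 : D^(-ε) ≤ 2^ε * (1+b)^(-ε) := by
          have t1 : D^(-ε) ≤ ((1+b)/2)^(-ε) :=
            Real.rpow_le_rpow_of_nonpos hR hDR.le (by linarith)
          have t2 : ((1+b)/2)^(-ε) = (1+b)^(-ε) * 2^ε := by
            rw [div_const_rpow h1b.le (by norm_num), neg_neg]
          rw [t2] at t1
          calc D^(-ε) ≤ (1+b)^(-ε) * 2^ε := t1
            _ = 2^ε * (1+b)^(-ε) := by ring
        have step5 : (1+a)^(-(α-ε)) * (1+a)^(β-2-s) = (1+a)^(-t₂) := by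
          rw [← Real.rpow_add h1a, ht₂def]; congr 1; ring
        have step6 : (1+b)^(-ε) * (1+b)^(-(2:ℝ)) ≤ (1+b)^(-s) := by
          rw [← Real.rpow_add h1b]
          exact Real.rpow_le_rpow_of_exponent_le h1b1 (by linarith)
        have hDα : D^(-α) ≤ (3^(α-ε) * (1+a)^(-(α-ε))) * (2^ε * (1+b)^(-ε)) := by
          rw [step2]
          apply mul_le_mul step3 step4 (Real.rpow_nonneg hD0 _)
          positivity
        calc ((a+b) * D^(-(1+α))) * ((1+a)^(β-2-s) * (1+b)^(-(2:ℝ)))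
            ≤ (5 * D^(-α)) * ((1+a)^(β-2-s) * (1+b)^(-(2:ℝ))) := by
              apply mul_le_mul_of_nonneg_right step1
              exact mul_nonneg (Real.rpow_nonneg h1a.le _) (Real.rpow_nonneg h1b.le _)
          _ ≤ (5 * ((3^(α-ε) * (1+a)^(-(α-ε))) * (2^ε * (1+b)^(-ε))))
              * ((1+a)^(β-2-s) * (1+b)^(-(2:ℝ))) := by
              apply mul_le_mul_of_nonneg_right _
                (mul_nonneg (Real.rpow_nonneg h1a.le _) (Real.rpow_nonneg h1b.le _))
              exact mul_le_mul_of_nonneg_left hDα (by norm_num)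
          _ = (5*3^(α-ε)*2^ε) * (((1+a)^(-(α-ε)) * (1+a)^(β-2-s))
              * ((1+b)^(-ε) * (1+b)^(-(2:ℝ)))) := by ring
          _ ≤ (5*3^(α-ε)*2^ε) * ((1+a)^(-t₂) * (1+b)^(-s)) := by
              apply mul_le_mul_of_nonneg_left _ (by positivity)
              rw [step5]
              apply mul_le_mul_of_nonneg_left step6 (Real.rpow_nonneg h1a.le _)
          _ = (5*3^(α-ε)*2^ε) * ((1+b)^(-s) * (1+a)^(-t₂)) := by ring
      calc ENNReal.ofReal (kb α β x y * (1+‖x‖)^(-s))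
          ≤ Ψ₂ x := ENNReal.ofReal_le_ofReal (by rw [← hadef]; exact hreal)
        _ ≤ Ψ₁ x + Ψ₂ x := le_add_self
  have hΨ₁int : ∫⁻ x, Ψ₁ x ≤ ENNReal.ofReal (3*2^(2+s-β) * 2^(α-1)) * c
      * ENNReal.ofReal ((1+b)^(-s)) := by
    rw [hΨ₁]
    rw [lintegral_const_mul' _ _ ENNReal.ofReal_ne_top]
    calc ENNReal.ofReal (3*2^(2+s-β) * (1+b)^(β-3-s)) *
          ∫⁻ x, (Metric.closedBall y R).indicator
            (fun x => ENNReal.ofReal (‖y - x‖ ^ (-(1+α)))) x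
        ≤ ENNReal.ofReal (3*2^(2+s-β) * (1+b)^(β-3-s)) * (c * ENNReal.ofReal (R^(1-α))) :=
          mul_le_mul_right (hball y R hR) _
      _ ≤ ENNReal.ofReal (3*2^(2+s-β) * 2^(α-1)) * c * ENNReal.ofReal ((1+b)^(-s)) := by
          rw [show ENNReal.ofReal (3*2^(2+s-β) * (1+b)^(β-3-s)) * (c * ENNReal.ofReal (R^(1-α)))
              = (ENNReal.ofReal (3*2^(2+s-β) * (1+b)^(β-3-s)) * ENNReal.ofReal (R^(1-α))) * c
              by ring]
          rw [show ENNReal.ofReal (3*2^(2+s-β) * 2^(α-1)) * c * ENNReal.ofReal ((1+b)^(-s))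
              = (ENNReal.ofReal (3*2^(2+s-β) * 2^(α-1)) * ENNReal.ofReal ((1+b)^(-s))) * c
              by ring]
          apply mul_le_mul_left
          rw [← ENNReal.ofReal_mul (by positivity), ← ENNReal.ofReal_mul (by positivity)]
          apply ENNReal.ofReal_le_ofReal
          have e1 : R^(1-α) = (1+b)^(1-α) * 2^(α-1) := by
            rw [hRdef, div_const_rpow h1b.le (by norm_num)]
            congr 2
            ring
          rw [e1]
          have key : (1+b)^(β-3-s) * (1+b)^(1-α) ≤ (1+b)^(-s) := by
            rw [← Real.rpow_add h1b]
            exact Real.rpow_le_rpow_of_exponent_le h1b1 (by linarith)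
          calc 3*2^(2+s-β) * (1+b)^(β-3-s) * ((1+b)^(1-α) * 2^(α-1))
              = (3*2^(2+s-β) * 2^(α-1)) * ((1+b)^(β-3-s) * (1+b)^(1-α)) := by ring
            _ ≤ (3*2^(2+s-β) * 2^(α-1)) * (1+b)^(-s) :=
                mul_le_mul_of_nonneg_left key (by positivity)
  have hΨ₂int : ∫⁻ x, Ψ₂ x ≤ ENNReal.ofReal (5*3^(α-ε)*2^ε) * I3
      * ENNReal.ofReal ((1+b)^(-s)) := by
    rw [hΨ₂]
    have e : ∀ x : E2, (5*3^(α-ε)*2^ε) * ((1+b)^(-s) * (1+‖x‖)^(-t₂))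
        = ((5*3^(α-ε)*2^ε) * (1+b)^(-s)) * (1+‖x‖)^(-t₂) := fun x => by ring
    simp_rw [e]
    rw [lint_ofReal_const_mul _ (by positivity)]
    rw [← hI3def, ENNReal.ofReal_mul (by positivity)]
    ring_nf
    exact le_refl _
  calc ∫⁻ x, ENNReal.ofReal (kb α β x y * (1+‖x‖)^(-s))
      ≤ ∫⁻ x, (Ψ₁ x + Ψ₂ x) := lintegral_mono hpt
    _ = (∫⁻ x, Ψ₁ x) + ∫⁻ x, Ψ₂ x := by
        apply lintegral_add_left
        rw [hΨ₁]
        apply Measurable.const_mul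
        exact ((measurable_const.sub measurable_id').norm.pow_const _).ennreal_ofReal.indicator
          measurableSet_closedBall
    _ ≤ ENNReal.ofReal (3*2^(2+s-β) * 2^(α-1)) * c * ENNReal.ofReal ((1+b)^(-s))
        + ENNReal.ofReal (5*3^(α-ε)*2^ε) * I3 * ENNReal.ofReal ((1+b)^(-s)) :=
        add_le_add hΨ₁int hΨ₂int
    _ = (ENNReal.ofReal (3*2^(2+s-β) * 2^(α-1)) * c + ENNReal.ofReal (5*3^(α-ε)*2^ε) * I3)
        * ENNReal.ofReal ((1+b)^(-s)) := by ring

lemma enn_rpow_two (x : ℝ≥0∞) : x ^ (2:ℝ) = x * x := by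
  rw [show (2:ℝ) = ((2:ℕ):ℝ) by norm_num, ENNReal.rpow_natCast, pow_two]

lemma enn_rpow_half_sq (x : ℝ≥0∞) : (x ^ (1/2:ℝ)) ^ (2:ℝ) = x := by
  rw [← ENNReal.rpow_mul]
  norm_num

/-- Weighted Schur test. -/
lemma schur (K : E2 → E2 → ℝ≥0∞) (hK : Measurable (Function.uncurry K))
    (H : E2 → ℝ≥0∞) (hH : Measurable H) (hH0 : ∀ z, H z ≠ 0) (hHtop : ∀ z, H z ≠ ∞)
    (Λ : ℝ≥0∞) (hΛ : Λ ≠ ∞)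
    (hA : ∀ x, ∫⁻ y, K x y * H y ≤ Λ * H x)
    (hB : ∀ y, ∫⁻ x, K x y * H x ≤ Λ * H y)
    (F : E2 → ℝ≥0∞) (hF : Measurable F) (hFtop : ∀ z, F z ≠ ∞) :
    ∫⁻ x, (∫⁻ y, K x y * F y) ^ (2:ℝ) ≤ (Λ * Λ) * ∫⁻ y, F y ^ (2:ℝ) := by
  have hKsec : ∀ x, Measurable (fun y => K x y) := fun x => hK.comp measurable_prodMk_left
  set S : E2 → ℝ≥0∞ := fun x => ∫⁻ y, K x y * (F y * F y * (H y)⁻¹) with hS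
  have hstep1 : ∀ x, (∫⁻ y, K x y * F y) ^ (2:ℝ) ≤ (Λ * H x) * S x := by
    intro x
    have hconj : Real.HolderConjugate 2 2 := Real.HolderConjugate.two_two
    set φ₁ : E2 → ℝ≥0∞ := fun y => (K x y * H y) ^ (1/2:ℝ) with hφ₁
    set φ₂ : E2 → ℝ≥0∞ := fun y => (K x y * (F y * F y * (H y)⁻¹)) ^ (1/2:ℝ) with hφ₂
    have hm1 : AEMeasurable φ₁ volume := (((hKsec x).mul hH).pow_const _).aemeasurable
    have hm2 : AEMeasurable φ₂ volume :=
      (((hKsec x).mul ((hF.mul hF).mul hH.inv)).pow_const _).aemeasurable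
    have hprod : ∀ y, φ₁ y * φ₂ y = K x y * F y := by
      intro y
      rw [hφ₁, hφ₂]
      rw [← ENNReal.mul_rpow_of_nonneg _ _ (by norm_num : (0:ℝ) ≤ 1/2)]
      have e : K x y * H y * (K x y * (F y * F y * (H y)⁻¹))
          = (K x y * F y) * (K x y * F y) * (H y * (H y)⁻¹) := by ring
      rw [e, ENNReal.mul_inv_cancel (hH0 y) (hHtop y), mul_one,
        ← enn_rpow_two (K x y * F y), ← ENNReal.rpow_mul]
      norm_num
    have hsq1 : ∀ y, φ₁ y ^ (2:ℝ) = K x y * H y := fun y => enn_rpow_half_sq _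
    have hsq2 : ∀ y, φ₂ y ^ (2:ℝ) = K x y * (F y * F y * (H y)⁻¹) := fun y =>
      enn_rpow_half_sq _
    have hH2 := ENNReal.lintegral_mul_le_Lp_mul_Lq volume hconj hm1 hm2
    calc (∫⁻ y, K x y * F y) ^ (2:ℝ)
        = (∫⁻ y, φ₁ y * φ₂ y) ^ (2:ℝ) := by
          rw [lintegral_congr hprod]
      _ ≤ ((∫⁻ y, φ₁ y ^ (2:ℝ)) ^ (1/2:ℝ) * (∫⁻ y, φ₂ y ^ (2:ℝ)) ^ (1/2:ℝ)) ^ (2:ℝ) := by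
          apply ENNReal.rpow_le_rpow _ (by norm_num)
          simpa using hH2
      _ = (∫⁻ y, φ₁ y ^ (2:ℝ)) * (∫⁻ y, φ₂ y ^ (2:ℝ)) := by
          rw [ENNReal.mul_rpow_of_nonneg _ _ (by norm_num : (0:ℝ) ≤ 2),
            enn_rpow_half_sq, enn_rpow_half_sq]
      _ = (∫⁻ y, K x y * H y) * S x := by
          rw [hS, lintegral_congr hsq1, lintegral_congr hsq2]
      _ ≤ (Λ * H x) * S x := mul_le_mul_left (hA x) _
  have hSwap : ∫⁻ x, H x * S x ≤ Λ * ∫⁻ y, F y * F y := by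
    have e1 : ∀ x, H x * S x = ∫⁻ y, H x * (K x y * (F y * F y * (H y)⁻¹)) :=
      fun x => (lintegral_const_mul' (H x) _ (hHtop x)).symm
    rw [lintegral_congr e1]
    have hmeas : AEMeasurable
        (Function.uncurry fun x y => H x * (K x y * (F y * F y * (H y)⁻¹)))
        (volume.prod volume) := by
      apply Measurable.aemeasurable
      exact (hH.comp measurable_fst).mul
        (hK.mul (((hF.comp measurable_snd).mul (hF.comp measurable_snd)).mul
          ((hH.comp measurable_snd).inv)))
    rw [lintegral_lintegral_swap hmeas]
    have e2 : ∀ y, (∫⁻ x, H x * (K x y * (F y * F y * (H y)⁻¹)))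
        = (∫⁻ x, K x y * H x) * (F y * F y * (H y)⁻¹) := by
      intro y
      have hc : F y * F y * (H y)⁻¹ ≠ ∞ :=
        ENNReal.mul_ne_top (ENNReal.mul_ne_top (hFtop y) (hFtop y))
          (ENNReal.inv_ne_top.mpr (hH0 y))
      rw [← lintegral_mul_const' _ _ hc]
      apply lintegral_congr
      intro x
      ring
    rw [lintegral_congr e2]
    calc ∫⁻ y, (∫⁻ x, K x y * H x) * (F y * F y * (H y)⁻¹)
        ≤ ∫⁻ y, (Λ * H y) * (F y * F y * (H y)⁻¹) :=
          lintegral_mono fun y => mul_le_mul_left (hB y) _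
      _ = ∫⁻ y, Λ * (F y * F y) := by
          apply lintegral_congr
          intro y
          calc (Λ * H y) * (F y * F y * (H y)⁻¹)
              = Λ * ((F y * F y) * (H y * (H y)⁻¹)) := by ring
            _ = Λ * (F y * F y) := by
                rw [ENNReal.mul_inv_cancel (hH0 y) (hHtop y), mul_one]
      _ = Λ * ∫⁻ y, F y * F y := lintegral_const_mul' _ _ hΛ
  calc ∫⁻ x, (∫⁻ y, K x y * F y) ^ (2:ℝ)
      ≤ ∫⁻ x, (Λ * H x) * S x := lintegral_mono hstep1
    _ = Λ * ∫⁻ x, H x * S x := by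
        rw [← lintegral_const_mul' Λ _ hΛ]
        apply lintegral_congr
        intro x
        ring
    _ ≤ Λ * (Λ * ∫⁻ y, F y * F y) := mul_le_mul_right hSwap _
    _ = (Λ * Λ) * ∫⁻ y, F y ^ (2:ℝ) := by
        have : ∀ y : E2, F y ^ (2:ℝ) = F y * F y := fun y => enn_rpow_two _
        rw [lintegral_congr this]
        ring

lemma params {α β : ℝ} (hα0 : 0 < α) (hα1 : α < 1) (hβ0 : 0 ≤ β) (hβ : β < 1+α) :
    ∃ s ε : ℝ, 0 < s ∧ s < 2 ∧ β - 2 - α ≤ -s ∧ 0 < ε ∧ ε ≤ α ∧ β - α + ε < s := by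
  set m := max 0 (β - α) with hm
  set M := min 2 (2+α-β) with hM
  have hm1 : 0 ≤ m := le_max_left _ _
  have hm2 : β - α ≤ m := le_max_right _ _
  have hM1 : M ≤ 2 := min_le_left _ _
  have hM2 : M ≤ 2+α-β := min_le_right _ _
  have hmM : m < M := by
    apply max_lt
    · apply lt_min <;> linarith
    · apply lt_min <;> linarith
  refine ⟨(m+M)/2, min ((M-m)/4) (α/2), by linarith, by linarith, by linarith, ?_, ?_, ?_⟩
  · apply lt_min <;> linarith
  · calc min ((M-m)/4) (α/2) ≤ α/2 := min_le_right _ _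
      _ ≤ α := by linarith
  · have h1 := min_le_left ((M-m)/4) (α/2)
    linarith

lemma kker_uncurry_meas (α β : ℝ) : Measurable (Function.uncurry (Kker α β)) := by
  unfold Function.uncurry Kker
  fun_prop

end KOp

/-- the integral operator `T f(x) = ∫ K(x,y) f(y) dy` is bounded on `L²(ℝ²)`
for every `α ∈ (0,1)` and `0 ≤ β < 1+α`. -/
theorem kernel_operator_L2_bounded (α β : ℝ) (hα : α ∈ Set.Ioo (0:ℝ) 1)
    (hβ0 : 0 ≤ β) (hβ : β < 1 + α) :
    ∃ C > 0, ∀ f : E2 → ℝ, MemLp f 2 volume →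
      eLpNorm (fun x => ∫ y : E2, Kker α β x y * f y) 2 volume ≤
        ENNReal.ofReal C * eLpNorm f 2 volume := by
  obtain ⟨hα0, hα1⟩ := hα
  have hβ2 : β ≤ 2 := by linarith
  obtain ⟨s, ε, hs0, hs2, hsle, hε0, hεα, hsε⟩ := KOp.params hα0 hα1 hβ0 hβ
  obtain ⟨Λ₁, hΛ₁, hA⟩ := KOp.estA (β := β) hα0 hα1 hβ0 hβ2 hs0 hsle
  obtain ⟨Λ₂, hΛ₂, hB⟩ := KOp.estB (β := β) hα0 hα1 hβ0 hβ2 hs0 hs2 hε0 hεα hsε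
  set H : E2 → ℝ≥0∞ := fun z => ENNReal.ofReal ((1+‖z‖)^(-s)) with hHdef
  set Λ : ℝ≥0∞ := ENNReal.ofReal 4 * (Λ₁ + Λ₂) with hΛdef
  have hΛtop : Λ ≠ ∞ := ENNReal.mul_ne_top ENNReal.ofReal_ne_top
    (ENNReal.add_ne_top.mpr ⟨hΛ₁, hΛ₂⟩)
  set K' : E2 → E2 → ℝ≥0∞ := fun x y => (‖Kker α β x y‖₊ : ℝ≥0∞) with hK'def
  have hK'm : Measurable (Function.uncurry K') :=
    (KOp.kker_uncurry_meas α β).nnnorm.coe_nnreal_ennreal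
  have hbridge : ∀ x y, K' x y ≤ ENNReal.ofReal 4 * ENNReal.ofReal (KOp.kb α β x y) := by
    intro x y
    rw [hK'def]
    simp only
    rw [show (‖Kker α β x y‖₊ : ℝ≥0∞) = ENNReal.ofReal |Kker α β x y| from Real.enorm_eq_ofReal_abs _, ← ENNReal.ofReal_mul (by norm_num : (0:ℝ) ≤ 4)]
    exact ENNReal.ofReal_le_ofReal (KOp.kker_le_kb hα0 hβ0 hβ2 x y)
  have hH0 : ∀ z, H z ≠ 0 := fun z =>
    (ENNReal.ofReal_pos.mpr (Real.rpow_pos_of_pos (by positivity) _)).ne'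
  have hHtop : ∀ z, H z ≠ ∞ := fun z => ENNReal.ofReal_ne_top
  have hHm : Measurable H := by
    apply Measurable.ennreal_ofReal
    exact (measurable_const.add measurable_norm).pow_const _
  have hA' : ∀ x, ∫⁻ y, K' x y * H y ≤ Λ * H x := by
    intro x
    calc ∫⁻ y, K' x y * H y
        ≤ ∫⁻ y, ENNReal.ofReal 4 * ENNReal.ofReal (KOp.kb α β x y * (1+‖y‖)^(-s)) := by
          apply lintegral_mono
          intro y
          calc K' x y * H y
              ≤ (ENNReal.ofReal 4 * ENNReal.ofReal (KOp.kb α β x y)) * H y :=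
                mul_le_mul_left (hbridge x y) _
            _ = ENNReal.ofReal 4 * ENNReal.ofReal (KOp.kb α β x y * (1+‖y‖)^(-s)) := by
                rw [ENNReal.ofReal_mul (KOp.kb_nonneg α β x y), hHdef]
                ring
      _ = ENNReal.ofReal 4 * ∫⁻ y, ENNReal.ofReal (KOp.kb α β x y * (1+‖y‖)^(-s)) :=
          lintegral_const_mul' _ _ ENNReal.ofReal_ne_top
      _ ≤ ENNReal.ofReal 4 * (Λ₁ * H x) := mul_le_mul_right (hA x) _
      _ ≤ Λ * H x := by
          rw [hΛdef, mul_assoc]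
          apply mul_le_mul_right
          exact mul_le_mul_left le_self_add _
  have hB' : ∀ y, ∫⁻ x, K' x y * H x ≤ Λ * H y := by
    intro y
    calc ∫⁻ x, K' x y * H x
        ≤ ∫⁻ x, ENNReal.ofReal 4 * ENNReal.ofReal (KOp.kb α β x y * (1+‖x‖)^(-s)) := by
          apply lintegral_mono
          intro x
          calc K' x y * H x
              ≤ (ENNReal.ofReal 4 * ENNReal.ofReal (KOp.kb α β x y)) * H x :=
                mul_le_mul_left (hbridge x y) _
            _ = ENNReal.ofReal 4 * ENNReal.ofReal (KOp.kb α β x y * (1+‖x‖)^(-s)) := by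
                rw [ENNReal.ofReal_mul (KOp.kb_nonneg α β x y), hHdef]
                ring
      _ = ENNReal.ofReal 4 * ∫⁻ x, ENNReal.ofReal (KOp.kb α β x y * (1+‖x‖)^(-s)) :=
          lintegral_const_mul' _ _ ENNReal.ofReal_ne_top
      _ ≤ ENNReal.ofReal 4 * (Λ₂ * H y) := mul_le_mul_right (hB y) _
      _ ≤ Λ * H y := by
          rw [hΛdef, mul_assoc]
          apply mul_le_mul_right
          exact mul_le_mul_left le_add_self _
  refine ⟨Λ.toReal + 1, by positivity, ?_⟩
  intro f hf
  set g := hf.1.mk f with hgdef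
  have hgm : StronglyMeasurable g := hf.1.stronglyMeasurable_mk
  have hfg : f =ᵐ[volume] g := hf.1.ae_eq_mk
  have hTfg : (fun x => ∫ y, Kker α β x y * f y) = (fun x => ∫ y, Kker α β x y * g y) := by
    funext x
    apply integral_congr_ae
    exact hfg.mono fun y hy => by dsimp only; rw [hy]
  rw [hTfg, eLpNorm_congr_ae hfg]
  set F : E2 → ℝ≥0∞ := fun y => (‖g y‖₊ : ℝ≥0∞) with hFdef
  have hFm : Measurable F := hgm.measurable.nnnorm.coe_nnreal_ennreal
  have hFtop : ∀ z, F z ≠ ∞ := fun z => ENNReal.coe_ne_top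
  have main := KOp.schur K' hK'm H hHm hH0 hHtop Λ hΛtop hA' hB' F hFm hFtop
  have h2R : ((2:ℝ≥0∞)).toReal = (2:ℝ) := by norm_num
  rw [eLpNorm_eq_lintegral_rpow_enorm_toReal (by norm_num) (by norm_num),
    eLpNorm_eq_lintegral_rpow_enorm_toReal (by norm_num) (by norm_num), h2R]
  calc (∫⁻ x, (‖∫ y, Kker α β x y * g y‖₊ : ℝ≥0∞) ^ (2:ℝ)) ^ (1/(2:ℝ))
      ≤ (∫⁻ x, (∫⁻ y, K' x y * F y) ^ (2:ℝ)) ^ (1/(2:ℝ)) := by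
        apply ENNReal.rpow_le_rpow _ (by norm_num)
        apply lintegral_mono
        intro x
        apply ENNReal.rpow_le_rpow _ (by norm_num : (0:ℝ) ≤ 2)
        calc (‖∫ y, Kker α β x y * g y‖₊ : ℝ≥0∞)
            ≤ ∫⁻ y, (‖Kker α β x y * g y‖₊ : ℝ≥0∞) :=
              enorm_integral_le_lintegral_enorm _
          _ = ∫⁻ y, K' x y * F y := by
              apply lintegral_congr
              intro y
              rw [hK'def, hFdef]
              simp only
              rw [nnnorm_mul, ENNReal.coe_mul]
    _ ≤ ((Λ * Λ) * ∫⁻ y, F y ^ (2:ℝ)) ^ (1/(2:ℝ)) :=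
        ENNReal.rpow_le_rpow main (by norm_num)
    _ = Λ * (∫⁻ y, F y ^ (2:ℝ)) ^ (1/(2:ℝ)) := by
        rw [ENNReal.mul_rpow_of_nonneg _ _ (by norm_num : (0:ℝ) ≤ 1/2)]
        congr 1
        rw [← KOp.enn_rpow_two Λ, ← ENNReal.rpow_mul]
        norm_num
    _ ≤ ENNReal.ofReal (Λ.toReal + 1) * (∫⁻ y, F y ^ (2:ℝ)) ^ (1/(2:ℝ)) := by
        apply mul_le_mul_left
        calc Λ = ENNReal.ofReal Λ.toReal := (ENNReal.ofReal_toReal hΛtop).symm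
          _ ≤ ENNReal.ofReal (Λ.toReal + 1) := ENNReal.ofReal_le_ofReal (by linarith)
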